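/- If M ∈ SL₂(ℕ) has L,U-factorization of length ℓ and trace T, and M is irreducible, then the largest eigenvalue λ of M satisfies (ℓ + 1 + √((ℓ+3)(ℓ−1)))/2 ≤ λ, and λ ≤ φ^ℓ if ℓ is even, λ ≤ F_ℓ + √(F_ℓ² − 1) if ℓ is odd. -/

import Mathlib

open Nat
def PL : ℕ → Matrix (Fin 2) (Fin 2) ℕ
  | 0 => 1
  | (m+1) => if (m+1) % 2 = 0 then !![fib m, fib (m+1); fib (m+1), fib (m+2)]
             else !![fib (m+1), fib m; fib (m+2), fib (m+1)]
def L : Matrix (Fin 2) (Fin 2) ℕ := !![1,0;1,1]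
def U : Matrix (Fin 2) (Fin 2) ℕ := !![1,1;0,1]
def mb (b : Bool) : Matrix (Fin 2) (Fin 2) ℕ := if b then L else U
def nx (b : Bool) (j : ℕ) : Bool := if j % 2 = 0 then b else !b

lemma PL_even {m : ℕ} (h : (m+1) % 2 = 0) :
    PL (m+1) = !![fib m, fib (m+1); fib (m+1), fib (m+2)] := by
  simp only [PL]; rw [if_pos h]

lemma PL_odd {m : ℕ} (h : (m+1) % 2 = 1) :
    PL (m+1) = !![fib (m+1), fib m; fib (m+2), fib (m+1)] := by
  simp only [PL]; rw [if_neg (by omega)]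

lemma I1L (j : ℕ) : PL j * mb (nx true j) = PL (j+1) := by
  match j with
  | 0 =>
    show PL 0 * mb true = PL 1
    rw [PL_odd (by norm_num)]
    show (1 : Matrix (Fin 2) (Fin 2) ℕ) * L = _
    rw [one_mul]
    ext i j; fin_cases i <;> fin_cases j <;> simp [L, fib]
  | m+1 =>
    rcases Nat.mod_two_eq_zero_or_one (m+1) with h | h
    · have hx : nx true (m+1) = true := by unfold nx; rw [if_pos h]
      rw [hx, PL_even h, PL_odd (show (m+2) % 2 = 1 by omega)]
      show _ * L = _
      rw [L, Matrix.mul_fin_two]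
      ext i j; fin_cases i <;> fin_cases j <;>
        simp [fib_add_two] <;> ring
    · have hx : nx true (m+1) = false := by unfold nx; rw [if_neg (by omega)]; rfl
      rw [hx, PL_odd h, PL_even (show (m+2) % 2 = 0 by omega)]
      show _ * U = _
      rw [U, Matrix.mul_fin_two]
      ext i j; fin_cases i <;> fin_cases j <;>
        simp [fib_add_two] <;> ring

def sw (A : Matrix (Fin 2) (Fin 2) ℕ) : Matrix (Fin 2) (Fin 2) ℕ :=
  !![A 1 1, A 1 0; A 0 1, A 0 0]
def PM (b : Bool) (k : ℕ) : Matrix (Fin 2) (Fin 2) ℕ := if b then PL k else sw (PL k)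
def mle (A B : Matrix (Fin 2) (Fin 2) ℕ) : Prop := ∀ i j, A i j ≤ B i j

lemma sw_mul (A B : Matrix (Fin 2) (Fin 2) ℕ) : sw (A * B) = sw A * sw B := by
  ext i j
  fin_cases i <;> fin_cases j <;>
    simp [sw, Matrix.mul_apply, Fin.sum_univ_two] <;> ring
lemma sw_one : sw 1 = 1 := by
  ext i j; fin_cases i <;> fin_cases j <;> simp [sw]
lemma sw_mb (b : Bool) : sw (mb b) = mb (!b) := by
  cases b <;> ext i j <;> fin_cases i <;> fin_cases j <;> simp [sw, mb, L, U]
lemma nx_not (b : Bool) (j : ℕ) : nx (!b) j = !(nx b j) := by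
  unfold nx; split <;> simp
lemma nx_succ (b : Bool) (j : ℕ) : nx b (j+1) = !(nx b j) := by
  unfold nx
  rcases Nat.mod_two_eq_zero_or_one j with h | h <;>
    simp [h, Nat.add_mod, Bool.not_not]
lemma nx_add (b : Bool) (i k : ℕ) : nx (nx b i) k = nx b (i+k) := by
  unfold nx
  rcases Nat.mod_two_eq_zero_or_one i with h | h <;>
    rcases Nat.mod_two_eq_zero_or_one k with h' | h' <;>
      simp [h, h', Nat.add_mod, Bool.not_not]

lemma mle_refl (A : Matrix (Fin 2) (Fin 2) ℕ) : mle A A := fun _ _ => le_refl _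
lemma mle_mul {A B C D : Matrix (Fin 2) (Fin 2) ℕ} (h1 : mle A B) (h2 : mle C D) :
    mle (A * C) (B * D) := by
  intro i j
  simp only [Matrix.mul_apply]
  exact Finset.sum_le_sum fun k _ => Nat.mul_le_mul (h1 i k) (h2 k j)
lemma mle_trans {A B C : Matrix (Fin 2) (Fin 2) ℕ} (h1 : mle A B) (h2 : mle B C) : mle A C :=
  fun i j => le_trans (h1 i j) (h2 i j)
lemma mle_sw {A B : Matrix (Fin 2) (Fin 2) ℕ} (h : mle A B) : mle (sw A) (sw B) := by
  intro i j; fin_cases i <;> fin_cases j <;> simpa [sw] using h _ _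

lemma mle_of_eq {A B : Matrix (Fin 2) (Fin 2) ℕ} (h : A = B) : mle A B := h ▸ mle_refl A

-- I1 general
lemma I1 (b : Bool) (j : ℕ) : PM b j * mb (nx b j) = PM b (j+1) := by
  cases b
  · show sw (PL j) * mb (nx false j) = sw (PL (j+1))
    have : nx false j = !(nx true j) := by rw [show (false) = !true from rfl, nx_not]
    rw [this, ← sw_mb, ← sw_mul, I1L]
  · exact I1L j


-- I2 for L
lemma I2L (j : ℕ) : mle (mb true * PL j * mb (!(nx true j))) (PL (j+2)) := by
  match j with
  | 0 =>
    apply mle_of_eq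
    show L * PL 0 * U = PL 2
    rw [PL_even (show (1+1) % 2 = 0 by norm_num)]
    show L * 1 * U = _
    rw [mul_one, L, U, Matrix.mul_fin_two]
    ext i j; fin_cases i <;> fin_cases j <;> simp [fib]
  | m+1 =>
    have hC : Nat.fib (m+2) = Nat.fib m + Nat.fib (m+1) := Nat.fib_add_two
    have hA : Nat.fib (m+2+1) = Nat.fib (m+1) + Nat.fib (m+2) := Nat.fib_add_two
    have hB : Nat.fib (m+2+2) = Nat.fib (m+2) + Nat.fib (m+2+1) := Nat.fib_add_two
    rcases Nat.mod_two_eq_zero_or_one (m+1) with h | h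
    · have hx : (!(nx true (m+1))) = false := by unfold nx; rw [if_pos h]; rfl
      rw [hx, PL_even h, PL_even (show (m+2+1) % 2 = 0 by omega)]
      show mle (L * _ * U) _
      rw [L, U, Matrix.mul_fin_two, Matrix.mul_fin_two]
      intro i j; fin_cases i <;> fin_cases j <;> simp <;> omega
    · have hx : (!(nx true (m+1))) = true := by unfold nx; rw [if_neg (by omega)]; rfl
      rw [hx, PL_odd h, PL_odd (show (m+2+1) % 2 = 1 by omega)]
      show mle (L * _ * L) _
      rw [L, Matrix.mul_fin_two, Matrix.mul_fin_two]
      intro i j; fin_cases i <;> fin_cases j <;> simp <;> omega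

lemma I2 (b : Bool) (j : ℕ) : mle (mb b * PM b j * mb (!(nx b j))) (PM b (j+2)) := by
  cases b
  · have h1 : mb false = sw (mb true) := by rw [sw_mb]; rfl
    have h2 : mb (!(nx false j)) = sw (mb (!(nx true j))) := by
      rw [sw_mb, Bool.not_not, show (false : Bool) = !true from rfl, nx_not, Bool.not_not]
    show mle (mb false * sw (PL j) * mb (!(nx false j))) (sw (PL (j+2)))
    rw [h1, h2, ← sw_mul, ← sw_mul]
    exact mle_sw (I2L j)
  · exact I2L j

-- I3
lemma I3 (b : Bool) (i : ℕ) : ∀ k, PM b i * PM (nx b i) k = PM b (i+k) := by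
  intro k
  induction k with
  | zero =>
    have : PM (nx b i) 0 = 1 := by cases (nx b i) <;> simp [PM, PL, sw_one]
    rw [this, mul_one, Nat.add_zero]
  | succ n ih =>
    rw [← I1, ← mul_assoc, ih, nx_add, I1, Nat.add_assoc]

lemma PM_one (x : Bool) : PM x 1 = mb x := by
  cases x
  · show sw (PL 1) = U
    rw [PL_odd (by norm_num)]
    ext i j; fin_cases i <;> fin_cases j <;> simp [sw, U, fib]
  · show PL 1 = L
    rw [PL_odd (by norm_num)]
    ext i j; fin_cases i <;> fin_cases j <;> simp [L, fib]

lemma PM_zero (x : Bool) : PM x 0 = 1 := by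
  cases x <;> simp [PM, PL, sw_one]

lemma bool_not_eq {x y : Bool} (h : ¬ x = y) : x = !y := by
  cases x <;> cases y <;> simp_all

lemma cover (w : List (Matrix (Fin 2) (Fin 2) ℕ)) (hw : ∀ A ∈ w, A = L ∨ A = U) :
    ∃ b c i j, i + j = w.length ∧ (j = 0 ∨ (1 ≤ i ∧ 1 ≤ j ∧ c = !(nx b i))) ∧
      mle w.prod (PM b i * PM c j) := by
  induction w using List.reverseRecOn with
  | nil =>
    refine ⟨true, true, 0, 0, rfl, Or.inl rfl, ?_⟩
    rw [PM_zero, mul_one, List.prod_nil]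
    exact mle_refl _
  | append_singleton ys A ih =>
    obtain ⟨b, c, i, j, hij, hleg, hm⟩ := ih (fun B hB => hw B (List.mem_append_left _ hB))
    obtain ⟨x, rfl⟩ : ∃ x, A = mb x := by
      rcases hw A (by simp) with h | h
      · exact ⟨true, h⟩
      · exact ⟨false, h⟩
    have hprod : (ys ++ [mb x]).prod = ys.prod * mb x := by simp
    have hlen : (ys ++ [mb x]).length = ys.length + 1 := by simp
    rw [hprod, hlen]
    rcases hleg with rfl | ⟨hi, hj, hc⟩
    · -- j = 0 : ys is dominated by a pure alternating product
      rw [PM_zero, mul_one] at hm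
      rcases Nat.eq_zero_or_pos i with rfl | hipos
      · -- empty
        refine ⟨x, true, 1, 0, by omega, Or.inl rfl, ?_⟩
        rw [PM_zero, mul_one, PM_one]
        have : mle (ys.prod * mb x) (PM true 0 * mb x) :=
          mle_mul (by rw [PM_zero]; rwa [PM_zero] at hm) (mle_refl _)
        rwa [PM_zero, one_mul] at this
      · by_cases hx : x = nx b i
        · refine ⟨b, true, i+1, 0, by omega, Or.inl rfl, ?_⟩
          rw [PM_zero, mul_one, ← I1 b i, ← hx]
          exact mle_mul hm (mle_refl _)
        · refine ⟨b, x, i, 1, by omega, Or.inr ⟨hipos, le_refl _, bool_not_eq hx⟩, ?_⟩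
          rw [PM_one]
          exact mle_mul hm (mle_refl _)
    · -- defect representation
      by_cases hx : x = nx c j
      · refine ⟨b, c, i, j+1, by omega, Or.inr ⟨hi, by omega, hc⟩, ?_⟩
        rw [← I1 c j, ← hx, ← mul_assoc]
        exact mle_mul hm (mle_refl _)
      · obtain ⟨i', rfl⟩ : ∃ i', i = i'+1 := ⟨i-1, by omega⟩
        have hc' : c = nx b i' := by rw [hc, nx_succ, Bool.not_not]
        have step1 : mle (ys.prod * mb x) (PM b (i'+1) * PM c j * mb x) :=
          mle_mul hm (mle_refl _)
        have e1 : PM b (i'+1) * PM c j * mb x = PM b i' * (mb c * PM c j * mb x) := by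
          rw [← I1 b i', ← hc']
          simp only [mul_assoc]
        have step2 : mle (PM b i' * (mb c * PM c j * mb x)) (PM b i' * PM c (j+2)) := by
          apply mle_mul (mle_refl _)
          rw [bool_not_eq hx]
          exact I2 c j
        have e2 : PM b i' * PM c (j+2) = PM b (i' + (j+2)) := by
          rw [hc', I3]
        refine ⟨b, true, i' + (j+2), 0, by omega, Or.inl rfl, ?_⟩
        rw [PM_zero, mul_one, ← e2]
        exact mle_trans step1 (e1 ▸ step2)

lemma sw_sw (A : Matrix (Fin 2) (Fin 2) ℕ) : sw (sw A) = A := by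
  ext i j; fin_cases i <;> fin_cases j <;> simp [sw]

lemma sw_PM (x : Bool) (k : ℕ) : sw (PM x k) = PM (!x) k := by
  cases x
  · show sw (sw (PL k)) = PL k
    exact sw_sw _
  · rfl

lemma PU_even {m : ℕ} (h : (m+1) % 2 = 0) :
    sw (PL (m+1)) = !![fib (m+2), fib (m+1); fib (m+1), fib m] := by
  rw [PL_even h]; ext i j; fin_cases i <;> fin_cases j <;> simp [sw]

lemma PU_odd {m : ℕ} (h : (m+1) % 2 = 1) :
    sw (PL (m+1)) = !![fib (m+1), fib (m+2); fib m, fib (m+1)] := by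
  rw [PL_odd h]; ext i j; fin_cases i <;> fin_cases j <;> simp [sw]

lemma trace_mul_expl (a b c d e f g h : ℕ) :
    (!![a,b;c,d] * !![e,f;g,h]).trace = (a*e + b*g) + (c*f + d*h) := by
  rw [Matrix.mul_fin_two, Matrix.trace_fin_two]
  simp

lemma rearr {a A b B : ℕ} (ha : a ≤ A) (hb : b ≤ B) : a*B + A*b ≤ A*B + a*b := by
  obtain ⟨s, rfl⟩ := Nat.exists_eq_add_of_le ha
  obtain ⟨t, rfl⟩ := Nat.exists_eq_add_of_le hb
  ring_nf
  nlinarith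

/-- target bound for the trace of a length-n word -/
def tgt (n : ℕ) : ℕ := if n % 2 = 0 then fib (n+1) + fib (n-1) else 2 * fib n

lemma trace_defect_L (i' j' : ℕ) (c : Bool) (hc : c = !(nx true (i'+1))) :
    (PL (i'+1) * PM c (j'+1)).trace ≤ tgt (i'+1+(j'+1)) := by
  have hn : i'+1+(j'+1) = i'+j'+2 := by omega
  rw [hn]
  have A1 : fib (i'+j'+2) = fib i' * fib (j'+1) + fib (i'+1) * fib (j'+2) := by
    have := Nat.fib_add i' (j'+1)
    have e : i'+(j'+1)+1 = i'+j'+2 := by omega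
    rwa [e] at this
  have A2 : fib (i'+j'+2) = fib (i'+1) * fib j' + fib (i'+2) * fib (j'+1) := by
    have := Nat.fib_add (i'+1) j'
    have e : i'+1+j'+1 = i'+j'+2 := by omega
    rwa [e] at this
  have A3 : fib (i'+j'+3) = fib (i'+1) * fib (j'+1) + fib (i'+2) * fib (j'+2) := by
    have := Nat.fib_add (i'+1) (j'+1)
    have e : i'+1+(j'+1)+1 = i'+j'+3 := by omega
    rwa [e] at this
  have A4 : fib (i'+j'+1) = fib i' * fib j' + fib (i'+1) * fib (j'+1) := by
    have := Nat.fib_add i' j'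
    have e : i'+j'+1 = i'+j'+1 := rfl
    rwa [e] at this
  have R : fib i' * fib (j'+2) + fib (i'+2) * fib j' ≤
      fib (i'+2) * fib (j'+2) + fib i' * fib j' :=
    rearr (Nat.fib_mono (by omega)) (Nat.fib_mono (by omega))
  rcases Nat.mod_two_eq_zero_or_one (i'+1) with hi | hi
  · -- i even, c = false
    have hcv : c = false := by unfold nx at hc; rw [if_pos hi] at hc; simpa using hc
    subst hcv
    show (PL (i'+1) * sw (PL (j'+1))).trace ≤ _
    rcases Nat.mod_two_eq_zero_or_one (j'+1) with hj | hj
    · -- j even : n even, rearrangement case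
      rw [PL_even hi, PU_even hj, trace_mul_expl]
      have ht : tgt (i'+j'+2) = fib (i'+j'+3) + fib (i'+j'+1) := by
        unfold tgt
        rw [if_pos (by omega)]
        congr 1
      rw [ht]
      calc fib i' * fib (j'+2) + fib (i'+1) * fib (j'+1) +
            (fib (i'+1) * fib (j'+1) + fib (i'+2) * fib j')
          ≤ fib (i'+2) * fib (j'+2) + fib i' * fib j' +
            (fib (i'+1) * fib (j'+1) + fib (i'+1) * fib (j'+1)) := by
            linarith
        _ = fib (i'+j'+3) + fib (i'+j'+1) := by rw [A3, A4]; ring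
    · -- j odd : n odd, exact 2 fib
      rw [PL_even hi, PU_odd hj, trace_mul_expl]
      have ht : tgt (i'+j'+2) = 2 * fib (i'+j'+2) := by
        unfold tgt
        rw [if_neg (by omega)]
      rw [ht]
      have : fib i' * fib (j'+1) + fib (i'+1) * fib j' +
          (fib (i'+1) * fib (j'+2) + fib (i'+2) * fib (j'+1)) =
          (fib i' * fib (j'+1) + fib (i'+1) * fib (j'+2)) +
          (fib (i'+1) * fib j' + fib (i'+2) * fib (j'+1)) := by ring
      rw [this, ← A1, ← A2]
      omega
  · -- i odd, c = true
    have hcv : c = true := by unfold nx at hc; rw [if_neg (by omega)] at hc; simpa using hc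
    subst hcv
    show (PL (i'+1) * PL (j'+1)).trace ≤ _
    rcases Nat.mod_two_eq_zero_or_one (j'+1) with hj | hj
    · -- j even : n odd, exact
      rw [PL_odd hi, PL_even hj, trace_mul_expl]
      have ht : tgt (i'+j'+2) = 2 * fib (i'+j'+2) := by
        unfold tgt
        rw [if_neg (by omega)]
      rw [ht]
      have : fib (i'+1) * fib j' + fib i' * fib (j'+1) +
          (fib (i'+2) * fib (j'+1) + fib (i'+1) * fib (j'+2)) =
          (fib i' * fib (j'+1) + fib (i'+1) * fib (j'+2)) +
          (fib (i'+1) * fib j' + fib (i'+2) * fib (j'+1)) := by ring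
      rw [this, ← A1, ← A2]
      omega
    · -- j odd : n even, rearrangement
      rw [PL_odd hi, PL_odd hj, trace_mul_expl]
      have ht : tgt (i'+j'+2) = fib (i'+j'+3) + fib (i'+j'+1) := by
        unfold tgt
        rw [if_pos (by omega)]
        congr 1
      rw [ht]
      calc fib (i'+1) * fib (j'+1) + fib i' * fib (j'+2) +
            (fib (i'+2) * fib j' + fib (i'+1) * fib (j'+1))
          ≤ fib (i'+1) * fib (j'+1) + (fib (i'+2) * fib (j'+2) + fib i' * fib j') +
            fib (i'+1) * fib (j'+1) := by linarith
        _ = fib (i'+j'+3) + fib (i'+j'+1) := by rw [A3, A4]; ring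

lemma trace_sw (A : Matrix (Fin 2) (Fin 2) ℕ) : (sw A).trace = A.trace := by
  simp [Matrix.trace_fin_two, sw]; ring

lemma mle_trace {A B : Matrix (Fin 2) (Fin 2) ℕ} (h : mle A B) : A.trace ≤ B.trace := by
  simp only [Matrix.trace_fin_two]
  exact Nat.add_le_add (h 0 0) (h 1 1)

lemma trace_defect (b c : Bool) (i j : ℕ) (hi : 1 ≤ i) (hj : 1 ≤ j)
    (hc : c = !(nx b i)) : (PM b i * PM c j).trace ≤ tgt (i+j) := by
  obtain ⟨i', rfl⟩ : ∃ i', i = i'+1 := ⟨i-1, by omega⟩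
  obtain ⟨j', rfl⟩ : ∃ j', j = j'+1 := ⟨j-1, by omega⟩
  cases b
  · -- reduce to the L case by swapping
    have h1 : PM false (i'+1) * PM c (j'+1) = sw (PL (i'+1) * PM (!c) (j'+1)) := by
      rw [sw_mul, sw_PM, Bool.not_not]; rfl
    rw [h1, trace_sw]
    apply trace_defect_L
    rw [hc, show (false : Bool) = !true from rfl, nx_not, Bool.not_not]
  · exact trace_defect_L i' j' c hc

lemma trace_pure (b : Bool) (n : ℕ) (hn : 1 ≤ n) : (PM b n).trace ≤ tgt n := by
  obtain ⟨m, rfl⟩ : ∃ m, n = m+1 := ⟨n-1, by omega⟩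
  have hb : (PM b (m+1)).trace = (PL (m+1)).trace := by
    cases b
    · show (sw (PL (m+1))).trace = _
      rw [trace_sw]
    · rfl
  rw [hb]
  rcases Nat.mod_two_eq_zero_or_one (m+1) with h | h
  · rw [PL_even h]
    unfold tgt
    rw [if_pos h, Matrix.trace_fin_two]
    have e1 : fib (m+1+1) = fib (m+2) := rfl
    have e2 : m+1-1 = m := rfl
    simp only [e1, e2]
    simp
    omega
  · rw [PL_odd h]
    unfold tgt
    rw [if_neg (by omega), Matrix.trace_fin_two]
    simp
    omega

theorem trace_word_le (w : List (Matrix (Fin 2) (Fin 2) ℕ)) (hw : ∀ A ∈ w, A = L ∨ A = U)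
    (hn : 1 ≤ w.length) : w.prod.trace ≤ tgt w.length := by
  obtain ⟨b, c, i, j, hij, hleg, hm⟩ := cover w hw
  refine le_trans (mle_trace hm) ?_
  rcases hleg with rfl | ⟨hi, hj, hc⟩
  · rw [PM_zero, mul_one]
    rw [Nat.add_zero] at hij
    have := trace_pure b i (by omega)
    rw [hij]
    rwa [hij] at this
  · rw [← hij]
    exact trace_defect b c i j hi hj hc

lemma L_mul_expl (M : Matrix (Fin 2) (Fin 2) ℕ) :
    L * M = !![M 0 0, M 0 1; M 0 0 + M 1 0, M 0 1 + M 1 1] := by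
  ext i j; fin_cases i <;> fin_cases j <;>
    simp [L, Matrix.mul_apply, Fin.sum_univ_two]

lemma U_mul_expl (M : Matrix (Fin 2) (Fin 2) ℕ) :
    U * M = !![M 0 0 + M 1 0, M 0 1 + M 1 1; M 1 0, M 1 1] := by
  ext i j; fin_cases i <;> fin_cases j <;>
    simp [U, Matrix.mul_apply, Fin.sum_univ_two]

lemma prod_allL (w : List (Matrix (Fin 2) (Fin 2) ℕ)) (h : ∀ A ∈ w, A = L) :
    w.prod = !![1, 0; w.length, 1] := by
  induction w with
  | nil => ext i j; fin_cases i <;> fin_cases j <;> simp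
  | cons A t ih =>
    rw [List.prod_cons, h A (by simp), ih (fun B hB => h B (by simp [hB])),
      L_mul_expl]
    ext i j; fin_cases i <;> fin_cases j <;> simp <;> omega

lemma prod_allU (w : List (Matrix (Fin 2) (Fin 2) ℕ)) (h : ∀ A ∈ w, A = U) :
    w.prod = !![1, w.length; 0, 1] := by
  induction w with
  | nil => ext i j; fin_cases i <;> fin_cases j <;> simp
  | cons A t ih =>
    rw [List.prod_cons, h A (by simp), ih (fun B hB => h B (by simp [hB])),
      U_mul_expl]
    ext i j; fin_cases i <;> fin_cases j <;> simp <;> omega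

lemma pow_allL (k p : ℕ) : (!![1, 0; k, 1] : Matrix (Fin 2) (Fin 2) ℕ)^p = !![1, 0; k*p, 1] := by
  induction p with
  | zero => ext i j; fin_cases i <;> fin_cases j <;> simp
  | succ n ih =>
    rw [pow_succ, ih, Matrix.mul_fin_two]
    ext i j; fin_cases i <;> fin_cases j <;> simp <;> ring

lemma pow_allU (k p : ℕ) : (!![1, k; 0, 1] : Matrix (Fin 2) (Fin 2) ℕ)^p = !![1, k*p; 0, 1] := by
  induction p with
  | zero => ext i j; fin_cases i <;> fin_cases j <;> simp
  | succ n ih =>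
    rw [pow_succ, ih, Matrix.mul_fin_two]
    ext i j; fin_cases i <;> fin_cases j <;> simp <;> ring

lemma lower (w : List (Matrix (Fin 2) (Fin 2) ℕ)) (hw : ∀ A ∈ w, A = L ∨ A = U)
    (hL : ∃ A ∈ w, A = L) (hU : ∃ A ∈ w, A = U) :
    1 ≤ w.prod 0 1 ∧ 1 ≤ w.prod 1 0 ∧ w.length + 1 ≤ w.prod.trace := by
  induction w with
  | nil => simp at hL
  | cons A t ih =>
    rw [List.prod_cons]
    by_cases htL : ∃ B ∈ t, B = L
    · by_cases htU : ∃ B ∈ t, B = U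
      · -- t mixed
        obtain ⟨hb, hc, htr⟩ := ih (fun B hB => hw B (by simp [hB])) htL htU
        rcases hw A (by simp) with rfl | rfl
        · rw [L_mul_expl]
          refine ⟨by simpa using hb, ?_, ?_⟩
          · show 1 ≤ t.prod 0 0 + t.prod 1 0
            omega
          · rw [Matrix.trace_fin_two] at htr ⊢
            simp
            omega
        · rw [U_mul_expl]
          refine ⟨?_, by simpa using hc, ?_⟩
          · show 1 ≤ t.prod 0 1 + t.prod 1 1
            omega
          · rw [Matrix.trace_fin_two] at htr ⊢
            simp
            omega
      · -- t is all L
        have htl : ∀ B ∈ t, B = L := by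
          intro B hB
          rcases hw B (by simp [hB]) with h | h
          · exact h
          · exact absurd ⟨B, hB, h⟩ htU
        have hA : A = U := by
          obtain ⟨B, hB, rfl⟩ := hU
          rcases List.mem_cons.mp hB with rfl | hB'
          · rfl
          · exact absurd (htl _ hB') (by
              intro h
              have := congrFun (congrFun h 0) 1
              simp [L, U] at this)
        have htlen : 1 ≤ t.length := by
          obtain ⟨B, hB, rfl⟩ := hL
          rcases List.mem_cons.mp hB with h | hB'
          · exact absurd (hA ▸ h) (by
              intro h
              have := congrFun (congrFun h 0) 1
              simp [L, U] at this)
          · exact List.length_pos_iff.mpr (List.ne_nil_of_mem hB')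
        rw [hA, prod_allL t htl, U_mul_expl]
        refine ⟨by simp, by simp; omega, ?_⟩
        rw [Matrix.trace_fin_two]
        simp
      -- t all U
    · have htu : ∀ B ∈ t, B = U := by
        intro B hB
        rcases hw B (by simp [hB]) with h | h
        · exact absurd ⟨B, hB, h⟩ htL
        · exact h
      have hA : A = L := by
        obtain ⟨B, hB, rfl⟩ := hL
        rcases List.mem_cons.mp hB with rfl | hB'
        · rfl
        · exact absurd (htu _ hB') (by
            intro h
            have := congrFun (congrFun h 0) 1
            simp [L, U] at this)
      have htlen : 1 ≤ t.length := by
        obtain ⟨B, hB, rfl⟩ := hU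
        rcases List.mem_cons.mp hB with h | hB'
        · exact absurd (hA ▸ h) (by
            intro h
            have := congrFun (congrFun h 0) 1
            simp [L, U] at this)
        · exact List.length_pos_iff.mpr (List.ne_nil_of_mem hB')
      rw [hA, prod_allU t htu, L_mul_expl]
      refine ⟨by simp; omega, by simp, ?_⟩
      rw [Matrix.trace_fin_two]
      simp

noncomputable def phi : ℝ := (1 + Real.sqrt 5) / 2

lemma sqrt5_sq : Real.sqrt 5 ^ 2 = 5 := Real.sq_sqrt (by norm_num)

lemma phi_pow (n : ℕ) : phi ^ n = (2 * (fib (n+1):ℝ) - fib n + fib n * Real.sqrt 5) / 2 := by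
  induction n with
  | zero => norm_num [fib]
  | succ n ih =>
    rw [pow_succ, ih, phi]
    have h5 := sqrt5_sq
    have hf : (fib (n+1+1):ℝ) = fib n + fib (n+1) := by exact_mod_cast Nat.fib_add_two
    rw [hf]
    field_simp
    ring_nf
    linear_combination (fib n : ℝ) * h5

lemma cassini (n : ℕ) : ((fib (n+1) : ℤ))^2 = fib (n+1) * fib n + fib n^2 + (-1)^n := by
  induction n with
  | zero => simp [fib]
  | succ n ih =>
    have hf : (fib (n+1+1):ℤ) = fib n + fib (n+1) := by exact_mod_cast Nat.fib_add_two
    rw [hf]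
    ring_nf
    ring_nf at ih
    linear_combination -ih

lemma lam_mono {x y : ℝ} (hx : 0 ≤ x) (hxy : x ≤ y) :
    (x + Real.sqrt (x^2-4))/2 ≤ (y + Real.sqrt (y^2-4))/2 := by
  have h2 : x^2 - 4 ≤ y^2 - 4 := by nlinarith
  have := Real.sqrt_le_sqrt h2
  linarith

theorem stmt_19 (ℓ : ℕ) (w : List (Matrix (Fin 2) (Fin 2) ℕ))
    (hw : ∀ A ∈ w, A = L ∨ A = U) (hlen : w.length = ℓ)
    (hirr : ∃ p, ∀ i j, 0 < (w.prod ^ p) i j)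
    (T : ℕ) (hT : Matrix.trace w.prod = T) :
    let lam : ℝ := ((T : ℝ) + Real.sqrt ((T : ℝ) ^ 2 - 4)) / 2
    ((ℓ : ℝ) + 1 + Real.sqrt (((ℓ : ℝ) + 3) * ((ℓ : ℝ) - 1))) / 2 ≤ lam ∧
    (Even ℓ → lam ≤ phi ^ ℓ) ∧
    (Odd ℓ →
      lam ≤ (Nat.fib ℓ : ℝ) + Real.sqrt ((Nat.fib ℓ : ℝ) ^ 2 - 1)) := by
  obtain ⟨p, hp⟩ := hirr
  have hU : ∃ A ∈ w, A = U := by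
    by_contra h
    push_neg at h
    have hall : ∀ A ∈ w, A = L := fun A hA => (hw A hA).resolve_right (h A hA)
    rw [prod_allL w hall, pow_allL] at hp
    have := hp 0 1
    simp at this
  have hL : ∃ A ∈ w, A = L := by
    by_contra h
    push_neg at h
    have hall : ∀ A ∈ w, A = U := fun A hA => (hw A hA).resolve_left (h A hA)
    rw [prod_allU w hall, pow_allU] at hp
    have := hp 1 0
    simp at this
  obtain ⟨hb, hc, htr⟩ := lower w hw hL hU
  have hn1 : 1 ≤ w.length := by
    rcases w with _ | ⟨A, t⟩
    · simp at hL
    · simp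
  have hl1 : 1 ≤ ℓ := hlen ▸ hn1
  have hTl : ℓ + 1 ≤ T := by rw [← hT, ← hlen]; exact htr
  have hTu : T ≤ tgt ℓ := by rw [← hT, ← hlen]; exact trace_word_le w hw hn1
  have hTreal : ((ℓ:ℝ) + 1) ≤ (T:ℝ) := by
    have h' := (Nat.cast_le (α := ℝ)).mpr hTl
    push_cast at h'
    exact h'
  have hTnn : (0:ℝ) ≤ (T:ℝ) := Nat.cast_nonneg T
  intro lam
  refine ⟨?_, ?_, ?_⟩
  · -- lower bound
    show ((ℓ:ℝ) + 1 + Real.sqrt (((ℓ:ℝ)+3) * ((ℓ:ℝ)-1))) / 2 ≤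
      ((T:ℝ) + Real.sqrt ((T:ℝ)^2 - 4)) / 2
    have he : ((ℓ:ℝ)+3) * ((ℓ:ℝ)-1) = ((ℓ:ℝ)+1)^2 - 4 := by ring
    rw [he]
    exact lam_mono (by positivity) hTreal
  · -- even case
    intro hev
    obtain ⟨m, rfl⟩ : ∃ m, ℓ = m+1 := ⟨ℓ-1, by omega⟩
    have hm2 : (m+1) % 2 = 0 := Nat.even_iff.mp hev
    have hT2 : T ≤ fib (m+2) + fib m := by
      unfold tgt at hTu
      rw [if_pos hm2] at hTu
      exact hTu
    -- Lucas identity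
    have hmodd : Odd m := by
      rcases Nat.even_or_odd m with h | h
      · exfalso; rw [Nat.even_iff] at h; omega
      · exact h
    have hcz : ((fib (m+2) + fib m : ℕ) : ℤ)^2 = 5 * (fib (m+1):ℤ)^2 + 4 := by
      have hc := cassini m
      have hneg : ((-1:ℤ))^m = -1 := Odd.neg_one_pow hmodd
      rw [hneg] at hc
      have hf : (fib (m+2):ℤ) = fib m + fib (m+1) := by exact_mod_cast Nat.fib_add_two
      push_cast
      rw [hf]
      linear_combination (-4 : ℤ) * hc
    have hcr : ((fib (m+2) + fib m : ℕ) : ℝ)^2 - 4 = 5 * (fib (m+1):ℝ)^2 := by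
      have := hcz
      have : ((fib (m+2) + fib m : ℕ) : ℝ)^2 = 5 * (fib (m+1):ℝ)^2 + 4 := by
        exact_mod_cast hcz
      linarith
    have hsq : Real.sqrt (((fib (m+2) + fib m : ℕ) : ℝ)^2 - 4) =
        (fib (m+1):ℝ) * Real.sqrt 5 := by
      rw [hcr, show (5:ℝ) * (fib (m+1):ℝ)^2 = ((fib (m+1):ℝ) * Real.sqrt 5)^2 by
        rw [mul_pow, sqrt5_sq]; ring]
      exact Real.sqrt_sq (mul_nonneg (Nat.cast_nonneg _) (Real.sqrt_nonneg _))
    have hphi : phi ^ (m+1) = (((fib (m+2) + fib m : ℕ) : ℝ) +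
        (fib (m+1):ℝ) * Real.sqrt 5) / 2 := by
      rw [phi_pow]
      have hf : (fib (m+1+1):ℝ) = fib m + fib (m+1) := by exact_mod_cast Nat.fib_add_two
      push_cast
      rw [hf]
      ring
    show ((T:ℝ) + Real.sqrt ((T:ℝ)^2 - 4)) / 2 ≤ phi ^ (m+1)
    rw [hphi, ← hsq]
    exact lam_mono hTnn (by exact_mod_cast hT2)
  · -- odd case
    intro hodd
    have hm2 : ¬ (ℓ % 2 = 0) := by rw [← Nat.even_iff]; exact (Nat.not_even_iff_odd.mpr hodd)
    have hT2 : T ≤ 2 * fib ℓ := by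
      unfold tgt at hTu
      rw [if_neg hm2] at hTu
      exact hTu
    have hfib1 : 1 ≤ fib ℓ := Nat.fib_pos.mpr (by omega)
    have hfr : (1:ℝ) ≤ (fib ℓ:ℝ) := by exact_mod_cast hfib1
    have step : ((T:ℝ) + Real.sqrt ((T:ℝ)^2 - 4)) / 2 ≤
        (((2 * fib ℓ : ℕ):ℝ) + Real.sqrt (((2 * fib ℓ : ℕ):ℝ)^2 - 4)) / 2 :=
      lam_mono hTnn (by exact_mod_cast hT2)
    have hsq : Real.sqrt (((2 * fib ℓ : ℕ):ℝ)^2 - 4) = 2 * Real.sqrt ((fib ℓ:ℝ)^2 - 1) := by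
      have he : ((2 * fib ℓ : ℕ):ℝ)^2 - 4 = 4 * ((fib ℓ:ℝ)^2 - 1) := by push_cast; ring
      rw [he, show (4:ℝ) = 2^2 by norm_num, Real.sqrt_mul (by positivity) _,
        Real.sqrt_sq (by norm_num : (0:ℝ) ≤ 2)]
    show ((T:ℝ) + Real.sqrt ((T:ℝ)^2 - 4)) / 2 ≤ _
    refine le_trans step (le_of_eq ?_)
    rw [hsq]
    push_cast
    ring
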